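/- Let n be a positive integer and (a_i, b_i)_{i=1}^n pairs with 0 < a_i < b_i ≤ 1 and the a_i pairwise distinct. Then the comb inverse limit X = { x : ℕ → [0,1] | for every k, either x_k = x_{k+1}, or there exists i ≤ n with x_{k+1} ∈ [a_i, b_i] and x_k = a_i }, with the subspace topology from [0,1]^ℕ, is a dendrite: it is nonempty, compact, connected, locally connected, metrizable, and contains no subspace homeomorphic to the circle S¹. -/

import Mathlib

/-- The comb inverse limit associated to the family of pairs `(a i, b i)`, `i ∈ I`. -/
def combSet (I : Set ℕ) (a b : ℕ → ℝ) : Set (ℕ → ℝ) :=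
  {x | (∀ k, x k ∈ Set.Icc (0 : ℝ) 1) ∧
    ∀ k, x k = x (k + 1) ∨ ∃ i ∈ I, x (k + 1) ∈ Set.Icc (a i) (b i) ∧ x k = a i}

namespace CombAux

variable {I : Set ℕ} {a b : ℕ → ℝ}

/-- a valid single step of the comb system -/
def validStep (I : Set ℕ) (a b : ℕ → ℝ) (w s : ℝ) : Prop :=
  w = s ∨ ∃ i ∈ I, s ∈ Set.Icc (a i) (b i) ∧ w = a i

lemma mem_combSet_iff {x : ℕ → ℝ} :
    x ∈ combSet I a b ↔ (∀ k, x k ∈ Set.Icc (0 : ℝ) 1) ∧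
      ∀ k, validStep I a b (x k) (x (k + 1)) := Iff.rfl

lemma step_le {w s : ℝ} (h : validStep I a b w s) : w ≤ s := by
  rcases h with h | ⟨i, hi, hs, hw⟩
  · exact h.le
  · rw [hw]; exact hs.1

lemma comb_mono {x : ℕ → ℝ} (hx : x ∈ combSet I a b) : Monotone x :=
  monotone_nat_of_le_succ fun k => step_le (hx.2 k)

lemma validStep_refl (w : ℝ) : validStep I a b w w := Or.inl rfl

/-- convexity of the set of valid targets, given distinctness of the `a i`. -/
lemma validStep_uIcc (hdist : ∀ i ∈ I, ∀ j ∈ I, a i = a j → i = j)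
    {w s₁ s₂ s : ℝ} (h1 : validStep I a b w s₁) (h2 : validStep I a b w s₂)
    (hs : s ∈ Set.uIcc s₁ s₂) : validStep I a b w s := by
  rcases h1 with h1 | ⟨i, hi, hsi, hwi⟩
  · rcases h2 with h2 | ⟨j, hj, hsj, hwj⟩
    · left; rw [← h1, ← h2, Set.uIcc_self] at hs
      exact (Set.mem_singleton_iff.mp hs).symm
    · right
      refine ⟨j, hj, Set.ordConnected_Icc.uIcc_subset ?_ hsj hs, hwj⟩
      subst h1; rw [hwj]; exact ⟨le_refl _, le_trans hsj.1 hsj.2⟩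
  · rcases h2 with h2 | ⟨j, hj, hsj, hwj⟩
    · right
      refine ⟨i, hi, Set.ordConnected_Icc.uIcc_subset hsi ?_ hs, hwi⟩
      subst h2; rw [hwi]; exact ⟨le_refl _, le_trans hsi.1 hsi.2⟩
    · have hij : i = j := hdist i hi j hj (by rw [← hwi, ← hwj])
      subst hij
      exact Or.inr ⟨i, hi, Set.ordConnected_Icc.uIcc_subset hsi hsj hs, hwi⟩

/-- truncation with tail value `s` after position `p` -/
def trunc (y : ℕ → ℝ) (p : ℕ) (s : ℝ) : ℕ → ℝ := fun k => if k ≤ p then y k else s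

lemma trunc_mem {x : ℕ → ℝ} (hx : x ∈ combSet I a b) (p : ℕ) {s : ℝ}
    (hs : s ∈ Set.uIcc (x p) (x (p + 1))) : trunc x p s ∈ combSet I a b := by
  have hmono := comb_mono hx
  have hIcc : s ∈ Set.Icc (0 : ℝ) 1 :=
    Set.ordConnected_Icc.uIcc_subset (hx.1 p) (hx.1 (p + 1)) hs
  constructor
  · intro k
    by_cases hk : k ≤ p
    · simpa [trunc, hk] using hx.1 k
    · simpa [trunc, hk] using hIcc
  · intro k
    rcases lt_trichotomy k p with hk | hk | hk
    · have h1 : k ≤ p := hk.le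
      have h2 : k + 1 ≤ p := hk
      simpa [trunc, h1, h2] using hx.2 k
    · subst hk
      have h2 : ¬ (k + 1 ≤ k) := by omega
      simp only [trunc, le_refl, if_pos, h2, if_neg, not_false_iff]
      rw [Set.uIcc_of_le (hmono (Nat.le_succ k))] at hs
      rcases hx.2 k with h | ⟨i, hi, hsi, hwi⟩
      · left; rw [← h] at hs; exact le_antisymm hs.1 hs.2
      · exact Or.inr ⟨i, hi, ⟨hwi ▸ hs.1, le_trans hs.2 hsi.2⟩, hwi⟩
    · have h1 : ¬ (k ≤ p) := by omega
      have h2 : ¬ (k + 1 ≤ p) := by omega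
      simp [trunc, h1, h2, validStep_refl]


lemma continuous_trunc (y : ℕ → ℝ) (p : ℕ) : Continuous fun s => trunc y p s := by
  apply continuous_pi
  intro k
  by_cases hk : k ≤ p <;> simp [trunc, hk] <;> fun_prop

lemma tendsto_trunc_self (y : ℕ → ℝ) :
    Filter.Tendsto (fun p => trunc y p (y p)) Filter.atTop (nhds y) := by
  rw [tendsto_pi_nhds]
  intro k
  apply Filter.Tendsto.congr' (f₁ := fun _ => y k)
  · filter_upwards [Filter.eventually_ge_atTop k] with p hp
    simp [trunc, hp]
  · exact tendsto_const_nhds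

lemma comb_closed (hI : I.Finite) : IsClosed (combSet I a b) := by
  have : combSet I a b =
      (⋂ k, {x : ℕ → ℝ | x k ∈ Set.Icc (0:ℝ) 1}) ∩
      ⋂ k, ({x : ℕ → ℝ | x k = x (k+1)} ∪
        ⋃ i ∈ I, {x : ℕ → ℝ | x (k+1) ∈ Set.Icc (a i) (b i) ∧ x k = a i}) := by
    ext x
    simp only [combSet, Set.mem_setOf_eq, Set.mem_inter_iff, Set.mem_iInter,
      Set.mem_union, Set.mem_iUnion]
    constructor
    · rintro ⟨h1, h2⟩
      refine ⟨h1, fun k => ?_⟩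
      rcases h2 k with h | ⟨i, hi, h⟩
      · exact Or.inl h
      · exact Or.inr ⟨i, hi, h⟩
    · rintro ⟨h1, h2⟩
      refine ⟨h1, fun k => ?_⟩
      rcases h2 k with h | ⟨i, hi, h⟩
      · exact Or.inl h
      · exact Or.inr ⟨i, hi, h⟩
  rw [this]
  apply IsClosed.inter
  · exact isClosed_iInter fun k => IsClosed.preimage (continuous_apply k) isClosed_Icc
  · refine isClosed_iInter fun k => IsClosed.union ?_ ?_
    · exact isClosed_eq (continuous_apply k) (continuous_apply (k+1))
    · apply Set.Finite.isClosed_biUnion hI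
      intro i _
      exact IsClosed.inter (IsClosed.preimage (continuous_apply (k+1)) isClosed_Icc)
        (isClosed_eq (continuous_apply k) continuous_const)

lemma comb_compact (hI : I.Finite) : IsCompact (combSet I a b) := by
  have hsub : combSet I a b ⊆ Set.pi Set.univ (fun _ : ℕ => Set.Icc (0:ℝ) 1) := by
    intro x hx k _
    exact hx.1 k
  exact (isCompact_univ_pi fun _ => isCompact_Icc).of_isClosed_subset (comb_closed hI) hsub

/-- Main abstract connectivity lemma. -/
lemma preconnected_of_tail_free {S : Set (ℕ → ℝ)} {m : ℕ} {c : ℕ → ℝ}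
    (hTail : ∀ y ∈ S, ∀ p, m ≤ p → ∀ s, s ∈ Set.uIcc (y p) (y (p+1)) → trunc y p s ∈ S)
    (hBase : ∀ y ∈ S, (∀ k, m ≤ k → y k = y m) →
      ∃ t, t ⊆ S ∧ (∀ z ∈ t, ∃ q, ∀ k, q ≤ k → z k = z q) ∧
        IsPreconnected t ∧ c ∈ t ∧ y ∈ t) :
    IsPreconnected S := by
  rcases S.eq_empty_or_nonempty with hS | ⟨y₀, hy₀⟩
  · rw [hS]; exact isPreconnected_empty
  -- cut at p: trunc y p (y p); it is constant from p on and in S for p ≥ m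
  have hcutS : ∀ y ∈ S, ∀ p, m ≤ p → trunc y p (y p) ∈ S := fun y hy p hp =>
    hTail y hy p hp (y p) Set.left_mem_uIcc
  have hcut_const : ∀ (y : ℕ → ℝ) (p : ℕ), ∀ k, p ≤ k → trunc y p (y p) k = trunc y p (y p) p := by
    intro y p k hk
    simp only [trunc, le_refl, if_pos]
    rcases eq_or_lt_of_le hk with h | h
    · subst h; simp
    · simp [Nat.not_le.mpr h]
  set S' : Set (ℕ → ℝ) := {z ∈ S | ∃ q, ∀ k, q ≤ k → z k = z q} with hS'def
  -- the key induction
  have key : ∀ d, ∀ y ∈ S, (∀ k, m + d ≤ k → y k = y (m + d)) →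
      ∃ t, t ⊆ S' ∧ IsPreconnected t ∧ c ∈ t ∧ y ∈ t := by
    intro d
    induction d with
    | zero =>
      intro y hy hconst
      rcases hBase y hy (by simpa using hconst) with ⟨t, htS, htconst, htpre, hct, hyt⟩
      exact ⟨t, fun z hz => ⟨htS hz, htconst z hz⟩, htpre, hct, hyt⟩
    | succ d ih =>
      intro y hy hconst
      set p := m + d with hp
      have hmp : m ≤ p := Nat.le_add_right m d
      have hy' : trunc y p (y p) ∈ S := hcutS y hy p hmp
      have hy'const : ∀ k, m + d ≤ k → trunc y p (y p) k = trunc y p (y p) (m + d) :=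
        hcut_const y p
      rcases ih (trunc y p (y p)) hy' hy'const with ⟨t', ht'S, ht'pre, hct', hy't'⟩
      set seg := (fun s => trunc y p s) '' Set.uIcc (y p) (y (p+1)) with hseg
      have hsegS' : seg ⊆ S' := by
        rintro _ ⟨s, hs, rfl⟩
        refine ⟨hTail y hy p hmp s hs, p + 1, fun k hk => ?_⟩
        have h1 : ¬ (k ≤ p) := by omega
        have h2 : ¬ (p + 1 ≤ p) := by omega
        simp [trunc, h1, h2]
      have hsegpre : IsPreconnected seg :=
        (isPreconnected_uIcc).image _ (continuous_trunc y p).continuousOn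
      have hy'seg : trunc y p (y p) ∈ seg := ⟨y p, Set.left_mem_uIcc, rfl⟩
      have hyseg : y ∈ seg := by
        refine ⟨y (p+1), Set.right_mem_uIcc, funext fun k => ?_⟩
        by_cases hk : k ≤ p
        · simp [trunc, hk]
        · simp only [trunc, hk, if_neg, not_false_iff]
          exact (hconst k (by omega)).trans (hconst (p+1) (by omega)).symm |>.symm
      refine ⟨t' ∪ seg, Set.union_subset ht'S hsegS',
        ht'pre.union (trunc y p (y p)) hy't' hy'seg hsegpre, Or.inl hct', Or.inr hyseg⟩
  have hcS' : c ∈ S' := by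
    rcases key 0 (trunc y₀ m (y₀ m)) (hcutS y₀ hy₀ m le_rfl) (hcut_const y₀ m) with
      ⟨t, htS', _, hct, _⟩
    exact htS' hct
  have hS'pre : IsPreconnected S' := by
    apply isPreconnected_of_forall c
    rintro y ⟨hyS, q, hq⟩
    have hconst : ∀ k, m + q ≤ k → y k = y (m + q) := by
      intro k hk
      rw [hq k (by omega), hq (m + q) (by omega)]
    rcases key q y hyS hconst with ⟨t, htS', htpre, hct, hyt⟩
    exact ⟨t, htS', hct, hyt, htpre⟩
  refine hS'pre.subset_closure (fun z hz => hz.1) ?_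
  intro y hy
  apply mem_closure_of_tendsto (tendsto_trunc_self y)
  filter_upwards [Filter.eventually_ge_atTop m] with p hp
  exact ⟨hcutS y hy p hp, p, hcut_const y p⟩

lemma comb_preconnected : IsPreconnected (combSet I a b) := by
  apply preconnected_of_tail_free (m := 0) (c := fun _ => (0:ℝ))
  · intro y hy p _ s hs
    exact trunc_mem hy p hs
  · intro y hy hconst
    have hy0 : y 0 ∈ Set.Icc (0:ℝ) 1 := hy.1 0
    refine ⟨(fun u => (fun _ => u : ℕ → ℝ)) '' Set.Icc 0 (y 0), ?_, ?_, ?_, ?_, ?_⟩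
    · rintro _ ⟨u, hu, rfl⟩
      exact ⟨fun k => ⟨hu.1, le_trans hu.2 hy0.2⟩, fun k => Or.inl rfl⟩
    · rintro _ ⟨u, hu, rfl⟩
      exact ⟨0, fun k _ => rfl⟩
    · exact isPreconnected_Icc.image _ (continuous_pi fun k => continuous_id).continuousOn
    · exact ⟨0, ⟨le_rfl, hy0.1⟩, rfl⟩
    · exact ⟨y 0, ⟨hy0.1, le_rfl⟩, funext fun k => (hconst k (Nat.zero_le k)).symm⟩

/-- choice of a small positive ε adapted to `w` on `[0,m]`. -/
lemma exists_eps (hI : I.Finite) (w : ℕ → ℝ) (m : ℕ) {c : ℝ} (hc : 0 < c) :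
    ∃ ε : ℝ, 0 < ε ∧ ε ≤ c ∧
      (∀ k ≤ m, ∀ i ∈ I, w k ≠ a i → ε ≤ |w k - a i|) ∧
      (∀ k < m, w k < w (k+1) → 2 * ε ≤ w (k+1) - w k) := by
  classical
  obtain ⟨J, hJ⟩ := hI.exists_finset_coe
  set F : Finset ℝ := insert c
    (((((Finset.range (m+1)) ×ˢ J).image fun p => |w p.1 - a p.2|).filter (0 < ·)) ∪
      (((Finset.range m).image fun k => (w (k+1) - w k)/2).filter (0 < ·))) with hF
  have hne : F.Nonempty := ⟨c, Finset.mem_insert_self _ _⟩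
  have hpos : ∀ r ∈ F, 0 < r := by
    intro r hr
    rcases Finset.mem_insert.mp hr with h | h
    · exact h ▸ hc
    · rcases Finset.mem_union.mp h with h | h
      · exact (Finset.mem_filter.mp h).2
      · exact (Finset.mem_filter.mp h).2
  refine ⟨F.min' hne, hpos _ (F.min'_mem hne), F.min'_le c (Finset.mem_insert_self _ _),
    ?_, ?_⟩
  · intro k hk i hi hne'
    apply F.min'_le
    refine Finset.mem_insert_of_mem (Finset.mem_union_left _ (Finset.mem_filter.mpr ⟨?_, ?_⟩))
    · exact Finset.mem_image.mpr ⟨(k, i), Finset.mem_product.mpr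
        ⟨Finset.mem_range.mpr (by omega), by rw [← hJ] at hi; exact hi⟩, rfl⟩
    · exact abs_pos.mpr (sub_ne_zero.mpr hne')
  · intro k hk hlt
    have : (w (k+1) - w k)/2 ∈ F := by
      refine Finset.mem_insert_of_mem (Finset.mem_union_right _ (Finset.mem_filter.mpr ⟨?_, ?_⟩))
      · exact Finset.mem_image.mpr ⟨k, Finset.mem_range.mpr hk, rfl⟩
      · linarith
    have := F.min'_le _ this
    linarith

/-- Rigidity: a point of the comb close to `w` on `[0,m]` agrees with `w` below `K`. -/
lemma rigidity {w w' : ℕ → ℝ} (hw' : w' ∈ combSet I a b)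
    {m K : ℕ} {ε : ℝ} (hKm : K ≤ m)
    (hclose : ∀ k ≤ m, |w' k - w k| < ε)
    (hdistA : ∀ k ≤ m, ∀ i ∈ I, w k ≠ a i → ε ≤ |w k - a i|)
    (hgap : ∀ k < K, w k < w (k+1) → 2 * ε ≤ w (k+1) - w k)
    (hanchor : K ≠ 0 → w (K-1) < w K) (hwmono : ∀ k < K, w k ≤ w (k+1)) :
    ∀ k < K, w' k = w k := by
  -- if w' jumps at k and k ≤ m then w' k = w k ... provided w k is close to w' k
  have hjump_eq : ∀ k ≤ m, w' k < w' (k+1) → w' k = w k := by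
    intro k hk hlt
    rcases hw'.2 k with h | ⟨i, hi, hsi, hwi⟩
    · exact absurd h (ne_of_lt hlt)
    · by_contra hne
      have h1 : w k ≠ a i := fun h => hne (by rw [hwi, ← h])
      have h2 := hdistA k hk i hi h1
      have h3 := hclose k hk
      rw [hwi] at h3
      rw [abs_sub_comm] at h3
      exact absurd (lt_of_le_of_lt h2 h3) (lt_irrefl _)
  have main : ∀ d, ∀ l, l + 1 + d = K → w' l = w l := by
    intro d
    induction d with
    | zero =>
      intro l hl
      have hlK : l + 1 = K := by omega
      have hK0 : K ≠ 0 := by omega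
      have hjw : w l < w (l+1) := by
        have := hanchor hK0
        simpa [← hlK] using this
      have hgapl := hgap l (by omega) hjw
      have hlm : l ≤ m := by omega
      have hl1m : l + 1 ≤ m := by omega
      have h1 := hclose l hlm
      have h2 := hclose (l+1) hl1m
      have hlt : w' l < w' (l+1) := by
        have := abs_lt.mp h1
        have := abs_lt.mp h2
        linarith [(abs_lt.mp h1).2, (abs_lt.mp h2).1]
      exact hjump_eq l hlm hlt
    | succ d ih =>
      intro l hl
      have ihl : w' (l+1) = w (l+1) := ih (l+1) (by omega)
      have hlm : l ≤ m := by omega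
      rcases lt_or_eq_of_le (comb_mono hw' (Nat.le_succ l)) with hlt | heq
      · exact hjump_eq l hlm hlt
      · -- w' l = w' (l+1) = w (l+1); show = w l
        have hwle : w l ≤ w (l+1) := hwmono l (by omega)
        rcases eq_or_lt_of_le hwle with heq2 | hlt2
        · rw [show w' l = w' (l+1) from heq, ihl, ← heq2]
        · exfalso
          have hg := hgap l (by omega) hlt2
          have h1 := (abs_lt.mp (hclose l hlm)).2
          have hε : 0 < ε := lt_of_le_of_lt (abs_nonneg _) (hclose 0 (Nat.zero_le m))
          have hwl : w' l = w (l+1) := (show w' l = w' (l+1) from heq).trans ihl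
          linarith
  intro k hk
  exact main (K - 1 - k) k (by omega)

lemma abs_sub_le_of_uIcc {v u s : ℝ} (hs : s ∈ Set.uIcc v u) : |s - v| ≤ |u - v| := by
  rcases le_total v u with h | h
  · rw [Set.uIcc_of_le h] at hs
    rw [abs_of_nonneg (by linarith [hs.1]), abs_of_nonneg (by linarith)]
    linarith [hs.2]
  · rw [Set.uIcc_of_ge h] at hs
    rw [abs_of_nonpos (by linarith [hs.2]), abs_of_nonpos (by linarith)]
    linarith [hs.1]

lemma window_preconnected (hdist : ∀ i ∈ I, ∀ j ∈ I, a i = a j → i = j)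
    {x : ℕ → ℝ} (hx : x ∈ combSet I a b) {K m : ℕ} {ε : ℝ} (hε : 0 < ε) (hKm : K ≤ m)
    (hconst : ∀ k, K ≤ k → k ≤ m → x k = x K)
    (hA : ∀ i ∈ I, |x K - a i| < ε → a i = x K) :
    IsPreconnected {y ∈ combSet I a b |
      (∀ k < K, y k = x k) ∧ ∀ k ≤ m, |y k - x k| < ε} := by
  classical
  set N := {y ∈ combSet I a b | (∀ k < K, y k = x k) ∧ ∀ k ≤ m, |y k - x k| < ε} with hN
  set v := x K with hv
  apply preconnected_of_tail_free (m := m) (c := trunc x m (x m))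
  · -- hTail
    rintro y ⟨hyX, hypre, hywin⟩ p hp s hs
    refine ⟨trunc_mem hyX p hs, fun k hk => ?_, fun k hk => ?_⟩
    · have : k ≤ p := by omega
      simpa [trunc, this] using hypre k hk
    · have : k ≤ p := by omega
      simpa [trunc, this] using hywin k hk
  · -- hBase
    rintro y ⟨hyX, hypre, hywin⟩ hyconst
    set u := y m with hu
    have hxm : x m = v := hconst m hKm le_rfl
    -- claim C
    have hC : ∀ k, K ≤ k → y k ≠ v → ∀ l, k ≤ l → y l = y k := by
      intro k hk hne l hl
      induction l, hl using Nat.le_induction with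
      | base => rfl
      | succ l hl ih =>
        by_cases hlm : m ≤ l
        · rw [hyconst (l+1) (by omega), ← hyconst l hlm, ih]
        · rcases hyX.2 l with h | ⟨i, hi, hsi, hwi⟩
          · rw [← h, ih]
          · exfalso
            have hxl : x l = v := hconst l (by omega) (by omega)
            have hwl := hywin l (by omega)
            rw [hxl, hwi] at hwl
            have : a i = v := hA i hi (by rwa [abs_sub_comm])
            exact hne (by rw [← ih, hwi, this])
    have hex : ∃ k, K ≤ k ∧ y k = u := ⟨m, hKm, rfl⟩
    set q := Nat.find hex with hq
    obtain ⟨hqK, hqu⟩ := Nat.find_spec hex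
    have hqm : q ≤ m := Nat.find_le ⟨hKm, rfl⟩
    have hP1 : ∀ k, K ≤ k → k < q → y k = v := by
      intro k hk hkq
      by_contra hne
      exact Nat.find_min hex hkq ⟨hk, (hC k hk hne m (by omega)).symm⟩
    have hP2 : ∀ k, q ≤ k → y k = u := by
      intro k hk
      by_cases hkm : k ≤ m
      · have h1 := comb_mono hyX hk
        rw [hqu] at h1
        exact le_antisymm (comb_mono hyX hkm) h1
      · rw [hyconst k (by omega)]
    -- the connecting segment
    set z : ℝ → (ℕ → ℝ) := fun s k => if k < q then x k else s with hz
    have hyz : y = z u := by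
      funext k
      by_cases hkq : k < q
      · by_cases hkK : k < K
        · simp [hz, hkq, hypre k hkK]
        · simp only [hz, hkq, if_pos]
          rw [hP1 k (by omega) hkq, hv, hconst k (by omega) (by omega)]
      · simp [hz, hkq, hP2 k (by omega)]
    have hcz : trunc x m (x m) = z v := by
      funext k
      by_cases hkq : k < q
      · have : k ≤ m := by omega
        simp [hz, trunc, hkq, this]
      · by_cases hkm : k ≤ m
        · simp only [hz, trunc, hkm, if_pos, hkq, if_neg, not_false_iff]
          exact hconst k (by omega) hkm
        · simp [hz, trunc, hkm, hkq, hxm]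
    have hvmem : v ∈ Set.Icc (0:ℝ) 1 := hxm ▸ hx.1 m
    have humem : u ∈ Set.Icc (0:ℝ) 1 := hyX.1 m
    have huv : |u - v| < ε := by
      have := hywin m le_rfl
      rwa [hxm] at this
    -- membership of z s in N for s ∈ uIcc v u
    have hzmem : ∀ s ∈ Set.uIcc v u, z s ∈ N := by
      intro s hs
      have hsIcc : s ∈ Set.Icc (0:ℝ) 1 := Set.ordConnected_Icc.uIcc_subset hvmem humem hs
      have hsv : |s - v| ≤ |u - v| := abs_sub_le_of_uIcc hs
      refine ⟨⟨fun k => ?_, fun k => ?_⟩, fun k hk => ?_, fun k hk => ?_⟩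
      · by_cases hkq : k < q <;> simp only [hz, hkq, if_pos, if_neg, not_false_iff]
        exacts [hx.1 k, hsIcc]
      · rcases lt_trichotomy (k+1) q with hk | hk | hk
        · have h1 : k < q := by omega
          simpa [hz, hk, h1] using hx.2 k
        · -- k = q - 1
          have h1 : k < q := by omega
          have h2 : ¬ (k + 1 < q) := by omega
          simp only [hz, h1, if_pos, h2, if_neg, not_false_iff]
          -- valid step from x k to s
          have hvalv : validStep I a b (x k) v := by
            by_cases hKq : q = K
            · have hkK : k + 1 = K := by omega
              have := hx.2 k
              rwa [show k + 1 = K from hkK, ← hv] at this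
            · have hxk : x k = v := hconst k (by omega) (by omega)
              rw [hxk]; exact validStep_refl v
          have hvalu : validStep I a b (x k) u := by
            have hstep := hyX.2 k
            have hyk : y k = x k := by
              by_cases hkK : k < K
              · exact hypre k hkK
              · rw [hP1 k (by omega) h1, hv, hconst k (by omega) (by omega)]
            have hyk1 : y (k+1) = u := hP2 (k+1) (by omega)
            rwa [hyk, hyk1] at hstep
          exact validStep_uIcc hdist hvalv hvalu hs
        · have h1 : ¬ (k < q) := by omega
          have h2 : ¬ (k + 1 < q) := by omega
          simp only [hz, h1, h2, if_neg, not_false_iff]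
          exact Or.inl trivial
      · have h1 : k < q := by omega
        simp [hz, h1]
      · by_cases hkq : k < q
        · simp [hz, hkq, abs_nonneg, hε]
        · simp only [hz, hkq, if_neg, not_false_iff]
          have hxk : x k = v := hconst k (by omega) hk
          rw [hxk]
          exact lt_of_le_of_lt hsv huv
    refine ⟨z '' Set.uIcc v u, ?_, ?_, ?_, ?_, ?_⟩
    · rintro _ ⟨s, hs, rfl⟩; exact hzmem s hs
    · rintro _ ⟨s, hs, rfl⟩
      refine ⟨q, fun k hk => ?_⟩
      have h1 : ¬ (k < q) := by omega
      have h2 : ¬ (q < q) := lt_irrefl q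
      simp [hz, h1, h2]
    · apply isPreconnected_uIcc.image
      apply Continuous.continuousOn
      apply continuous_pi
      intro k
      by_cases hkq : k < q <;> simp [hz, hkq] <;> fun_prop
    · exact ⟨v, Set.left_mem_uIcc, hcz.symm⟩
    · exact ⟨u, Set.right_mem_uIcc, hyz.symm⟩

/-- choice of a plateau start `K` with the rigidity property -/
lemma exists_K {x : ℕ → ℝ} (hx : x ∈ combSet I a b) {m : ℕ} {ε : ℝ}
    (hdistA : ∀ k ≤ m, ∀ i ∈ I, x k ≠ a i → ε ≤ |x k - a i|)
    (hgap : ∀ k < m, x k < x (k+1) → 2 * ε ≤ x (k+1) - x k) :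
    ∃ K, K ≤ m ∧ (∀ k, K ≤ k → k ≤ m → x k = x K) ∧
      ∀ y ∈ combSet I a b, (∀ k ≤ m, |y k - x k| < ε) → ∀ k < K, y k = x k := by
  classical
  set P : ℕ → Prop := fun k => k < m ∧ x k < x (k+1) with hP
  have hconst_of : ∀ K, (∀ k, K ≤ k → k < m → ¬ P k) → ∀ k, K ≤ k → k ≤ m → x k = x K := by
    intro K hnoP k hk hkm
    induction k, hk using Nat.le_induction with
    | base => rfl
    | succ k hk ih =>
      have h1 : k < m := by omega
      have h2 := hnoP k hk h1
      have h3 : ¬ (x k < x (k+1)) := fun h => h2 ⟨h1, h⟩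
      have := comb_mono hx (Nat.le_succ k)
      rw [show x (k+1) = x k from le_antisymm (not_lt.mp h3) this]
      exact ih (by omega)
  by_cases H : ∃ k, P k
  · obtain ⟨k0, hk0⟩ := H
    set j := Nat.findGreatest P m with hj
    have hjspec : P j := Nat.findGreatest_spec (le_of_lt hk0.1) hk0
    have hjm : j < m := hjspec.1
    refine ⟨j + 1, by omega, ?_, ?_⟩
    · apply hconst_of
      intro k hk hkm hPk
      exact Nat.findGreatest_is_greatest (show Nat.findGreatest P m < k by omega) (by omega) hPk
    · intro y hy hclose k hk
      refine rigidity hy (by omega) hclose hdistA ?_ ?_ (fun l _ => comb_mono hx (Nat.le_succ l)) k hk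
      · intro l hl hjump
        exact hgap l (by omega) hjump
      · intro _
        simpa using hjspec.2
  · refine ⟨0, Nat.zero_le m, ?_, fun y _ _ k hk => absurd hk (Nat.not_lt_zero k)⟩
    apply hconst_of
    intro k _ hkm hPk
    exact H ⟨k, hPk⟩

lemma cyl_isOpen (x : ℕ → ℝ) (m : ℕ) {ε : ℝ} :
    IsOpen {y : ℕ → ℝ | ∀ k ≤ m, |y k - x k| < ε} := by
  have : {y : ℕ → ℝ | ∀ k ≤ m, |y k - x k| < ε} =
      ⋂ k ∈ Finset.range (m+1), (fun y : ℕ → ℝ => y k) ⁻¹' Metric.ball (x k) ε := by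
    ext y
    simp [Nat.lt_succ_iff, Real.dist_eq]
  rw [this]
  exact isOpen_biInter_finset fun k _ =>
    (Metric.isOpen_ball).preimage (continuous_apply k)

lemma comb_locallyConnected (hI : I.Finite)
    (hdist : ∀ i ∈ I, ∀ j ∈ I, a i = a j → i = j) :
    LocallyConnectedSpace ↥(combSet I a b) := by
  rw [locallyConnectedSpace_iff_connected_subsets]
  intro x U hU
  rw [nhds_induced] at hU
  obtain ⟨W, hW, hWU⟩ := hU
  obtain ⟨O, hOW, hOopen, hxO⟩ := mem_nhds_iff.mp hW
  obtain ⟨J, u, hu, hJO⟩ := isOpen_pi_iff.mp hOopen _ hxO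
  set m := J.sup id with hm
  -- a uniform radius
  have hε0 : ∃ ε0 : ℝ, 0 < ε0 ∧ ∀ i ∈ J, Metric.ball ((x : ℕ → ℝ) i) ε0 ⊆ u i := by
    choose δ hδpos hδ using fun (i : ℕ) (hi : i ∈ J) =>
      Metric.isOpen_iff.mp (hu i hi).1 _ (hu i hi).2
    classical
    set F := insert (1:ℝ) (J.attach.image fun i => δ i.1 i.2) with hF
    have hne : F.Nonempty := ⟨1, Finset.mem_insert_self _ _⟩
    refine ⟨F.min' hne, ?_, ?_⟩
    · have := F.min'_mem hne
      rcases Finset.mem_insert.mp this with h | h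
      · rw [h]; norm_num
      · obtain ⟨i, _, hi2⟩ := Finset.mem_image.mp h
        rw [← hi2]; exact hδpos _ _
    · intro i hi
      refine subset_trans (Metric.ball_subset_ball ?_) (hδ i hi)
      exact F.min'_le _ (Finset.mem_insert_of_mem
        (Finset.mem_image.mpr ⟨⟨i, hi⟩, J.mem_attach _, rfl⟩))
  obtain ⟨ε0, hε0pos, hballs⟩ := hε0
  obtain ⟨ε, hεpos, hεle, hdistA, hgap⟩ := exists_eps hI (x : ℕ → ℝ) m hε0pos
  obtain ⟨K, hKm, hconst, hrigid⟩ := exists_K x.2 hdistA hgap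
  set cyl := {y : ℕ → ℝ | ∀ k ≤ m, |y k - (x : ℕ → ℝ) k| < ε} with hcyl
  refine ⟨Subtype.val ⁻¹' cyl, ?_, ?_, ?_⟩
  · exact ((cyl_isOpen _ m).preimage continuous_subtype_val).mem_nhds
      (by simp [hcyl, hεpos, abs_nonneg])
  · -- preconnected
    rw [← Topology.IsInducing.subtypeVal.isPreconnected_image]
    have himg : (Subtype.val '' (Subtype.val ⁻¹' cyl : Set ↥(combSet I a b))) =
        combSet I a b ∩ cyl := Subtype.image_preimage_coe _ _
    rw [himg]
    have heq : combSet I a b ∩ cyl = {y ∈ combSet I a b |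
        (∀ k < K, y k = (x : ℕ → ℝ) k) ∧ ∀ k ≤ m, |y k - (x : ℕ → ℝ) k| < ε} := by
      ext y
      constructor
      · rintro ⟨hyX, hyc⟩
        exact ⟨hyX, hrigid y hyX hyc, hyc⟩
      · rintro ⟨hyX, _, hyw⟩
        exact ⟨hyX, hyw⟩
    rw [heq]
    refine window_preconnected hdist x.2 hεpos hKm hconst ?_
    intro i hi hlt
    by_contra hne
    have := hdistA K hKm i hi (fun h => hne h.symm)
    exact absurd (lt_of_le_of_lt this hlt) (lt_irrefl _)
  · -- inclusion in U
    intro y hy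
    apply hWU
    apply hOW
    apply hJO
    intro i hi
    apply hballs i hi
    have him : i ≤ m := Finset.le_sup (f := id) hi
    have := hy i him
    rw [Metric.mem_ball, Real.dist_eq]
    exact lt_of_lt_of_le this hεle

/-- Separation: between two distinct points of the comb there is a point `z`
cutting the comb in two. -/
lemma separation_aux (hI : I.Finite) {x y : ℕ → ℝ}
    (hx : x ∈ combSet I a b) (hy : y ∈ combSet I a b) {k0 : ℕ}
    (hpre : ∀ k < k0, x k = y k) (hlt : x k0 < y k0) :
    ∃ z ∈ combSet I a b, z ≠ x ∧ z ≠ y ∧ ∃ u v : Set (ℕ → ℝ), IsOpen u ∧ IsOpen v ∧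
      (∀ w ∈ combSet I a b, w ≠ z → w ∈ u ∨ w ∈ v) ∧
      (∀ w ∈ combSet I a b, w ∈ u → w ∉ v) ∧ x ∈ v ∧ y ∈ u := by
  classical
  obtain ⟨t, htIoo, htA⟩ :=
    ((Set.Ioo_infinite hlt).diff (hI.image a)).nonempty
  have hxmono := comb_mono hx
  have hymono := comb_mono hy
  -- the step at k0 - 1, when k0 ≠ 0
  have hstep : k0 ≠ 0 → ∃ i ∈ I, x (k0 - 1) = a i ∧ a i ≤ t ∧ t ≤ b i := by
    intro hk0
    have hk' : k0 - 1 + 1 = k0 := by omega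
    have hxy' : x (k0 - 1) = y (k0 - 1) := hpre _ (by omega)
    rcases hy.2 (k0 - 1) with h | ⟨i, hi, hsi, hwi⟩
    · exfalso
      rw [hk'] at h
      have : x (k0 - 1) ≤ x k0 := hxmono (by omega)
      rw [hxy'] at this
      rw [← h] at hlt
      linarith
    · rw [hk'] at hsi
      refine ⟨i, hi, hxy'.trans hwi, ?_, le_trans (le_of_lt htIoo.2) hsi.2⟩
      have h1 : x (k0 - 1) ≤ x k0 := hxmono (by omega)
      have h2 : a i = x (k0 - 1) := (hxy'.trans hwi).symm
      linarith [htIoo.1]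
  set z : ℕ → ℝ := fun k => if k < k0 then x k else t with hzdef
  have hzX : z ∈ combSet I a b := by
    constructor
    · intro k
      by_cases hk : k < k0
      · simpa [hzdef, hk] using hx.1 k
      · simp only [hzdef, hk, if_neg, not_false_iff]
        have h0 : (0:ℝ) ≤ x k0 := (hx.1 k0).1
        have h1 : y k0 ≤ 1 := (hy.1 k0).2
        exact ⟨le_trans h0 (le_of_lt htIoo.1), le_trans (le_of_lt htIoo.2) h1⟩
    · intro k
      rcases lt_trichotomy (k+1) k0 with hk | hk | hk
      · have h1 : k < k0 := by omega
        simpa [hzdef, hk, h1] using hx.2 k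
      · have h1 : k < k0 := by omega
        have h2 : ¬ (k + 1 < k0) := by omega
        simp only [hzdef, h1, if_pos, h2, if_neg, not_false_iff]
        obtain ⟨i, hi, hxi, hti1, hti2⟩ := hstep (by omega)
        have hk' : k = k0 - 1 := by omega
        exact Or.inr ⟨i, hi, ⟨hti1, hti2⟩, hk' ▸ hxi⟩
      · have h1 : ¬ (k < k0) := by omega
        have h2 : ¬ (k + 1 < k0) := by omega
        simp only [hzdef, h1, h2, if_neg, not_false_iff]
        exact Or.inl trivial
  have hzk0 : z k0 = t := by simp [hzdef]
  have hzx : z ≠ x := by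
    intro h
    have := congrFun h k0
    rw [hzk0] at this
    exact absurd (this ▸ htIoo.1) (lt_irrefl _)
  have hzy : z ≠ y := by
    intro h
    have := congrFun h k0
    rw [hzk0] at this
    exact absurd (this ▸ htIoo.2) (lt_irrefl _)
  -- the branch above z
  set Uset : Set (ℕ → ℝ) :=
    {w ∈ combSet I a b | (∀ k < k0, w k = x k) ∧ t < w k0} with hUdef
  set u : Set (ℕ → ℝ) := ⋃ (w ∈ Uset) (ε ∈ {ε : ℝ | 0 < ε ∧
    ∀ y' ∈ combSet I a b, (∀ k ≤ k0, |y' k - w k| < ε) → y' ∈ Uset}),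
      {y' : ℕ → ℝ | ∀ k ≤ k0, |y' k - w k| < ε} with hudef
  have huopen : IsOpen u :=
    isOpen_biUnion fun w _ => isOpen_biUnion fun ε _ => cyl_isOpen w k0
  have huX : ∀ w' ∈ u, w' ∈ combSet I a b → w' ∈ Uset := by
    intro w' hw' hw'X
    rw [hudef] at hw'
    obtain ⟨w, hw, hrest⟩ := Set.mem_iUnion₂.mp hw'
    obtain ⟨ε, hε, hcylmem⟩ := Set.mem_iUnion₂.mp hrest
    exact hε.2 w' hw'X hcylmem
  have hUsetu : Uset ⊆ u := by
    intro w hw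
    obtain ⟨hwX, hwpre, hwt⟩ := hw
    obtain ⟨ε, hεpos, hεle, hdistA, hgap⟩ := exists_eps hI w k0 (show (0:ℝ) < w k0 - t by linarith)
    have hgood : ∀ y' ∈ combSet I a b, (∀ k ≤ k0, |y' k - w k| < ε) → y' ∈ Uset := by
      intro y' hy' hclose
      have hanchor : k0 ≠ 0 → w (k0 - 1) < w k0 := by
        intro hk0
        have h1 : w (k0 - 1) = x (k0 - 1) := hwpre _ (by omega)
        have h2 : x (k0 - 1) ≤ x k0 := hxmono (by omega)
        linarith [htIoo.1]
      have hrig := rigidity hy' le_rfl hclose hdistA hgap hanchor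
        (fun l _ => comb_mono hwX (Nat.le_succ l))
      refine ⟨hy', fun k hk => (hrig k hk).trans (hwpre k hk), ?_⟩
      have := (abs_lt.mp (hclose k0 le_rfl)).1
      linarith
    apply Set.mem_biUnion (show w ∈ Uset from ⟨hwX, hwpre, hwt⟩)
    apply Set.mem_biUnion (show ε ∈ {ε : ℝ | 0 < ε ∧ ∀ y' ∈ combSet I a b,
      (∀ k ≤ k0, |y' k - w k| < ε) → y' ∈ Uset} from ⟨hεpos, hgood⟩)
    intro k _
    simpa using hεpos
  -- the closed set above z, and the complementary open set
  set C : Set (ℕ → ℝ) :=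
    {w | (∀ k < k0, w k = x k) ∧ t ≤ w k0} ∩ combSet I a b with hCdef
  have hCclosed : IsClosed C := by
    apply IsClosed.inter _ (comb_closed hI)
    have h1 : {w : ℕ → ℝ | (∀ k < k0, w k = x k) ∧ t ≤ w k0} =
        (⋂ k, ⋂ _ : k < k0, {w : ℕ → ℝ | w k = x k}) ∩ {w : ℕ → ℝ | t ≤ w k0} := by
      ext w
      simp only [Set.mem_setOf_eq, Set.mem_inter_iff, Set.mem_iInter]
    rw [h1]
    apply IsClosed.inter
    · exact isClosed_iInter fun k => isClosed_iInter fun _ =>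
        isClosed_eq (continuous_apply k) continuous_const
    · exact isClosed_le continuous_const (continuous_apply k0)
  refine ⟨z, hzX, hzx, hzy, u, Cᶜ, huopen, hCclosed.isOpen_compl, ?_, ?_, ?_, ?_⟩
  · -- covering
    intro w hwX hwz
    by_cases hwC : w ∈ C
    · left
      obtain ⟨⟨hwpre, hwt⟩, _⟩ := hwC
      rcases lt_or_eq_of_le hwt with h | h
      · exact hUsetu ⟨hwX, hwpre, h⟩
      · exfalso
        apply hwz
        have htail : ∀ k, k0 ≤ k → w k = t := by
          intro k hk
          induction k, hk using Nat.le_induction with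
          | base => exact h.symm
          | succ k hk ih =>
            rcases hwX.2 k with h' | ⟨i, hi, hsi, hwi⟩
            · rw [← h', ih]
            · exfalso
              exact htA ⟨i, hi, by rw [← hwi, ih]⟩
        funext k
        by_cases hk : k < k0
        · rw [hwpre k hk]; simp [hzdef, hk]
        · rw [htail k (by omega)]; simp [hzdef, hk]
    · exact Or.inr hwC
  · -- disjointness on the comb
    intro w hwX hwu
    obtain ⟨_, hwpre, hwt⟩ := huX w hwu hwX
    simp only [Set.mem_compl_iff, not_not]
    exact ⟨⟨hwpre, le_of_lt hwt⟩, hwX⟩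
  · -- x on one side
    intro hxC
    obtain ⟨⟨_, hxt⟩, _⟩ := hxC
    exact absurd (lt_of_lt_of_le htIoo.1 hxt) (lt_irrefl _)
  · -- y on the other side
    exact hUsetu ⟨hy, fun k hk => (hpre k hk).symm, htIoo.2⟩

lemma separation (hI : I.Finite) {x y : ℕ → ℝ}
    (hx : x ∈ combSet I a b) (hy : y ∈ combSet I a b) (hxy : x ≠ y) :
    ∃ z ∈ combSet I a b, z ≠ x ∧ z ≠ y ∧ ∃ u v : Set (ℕ → ℝ), IsOpen u ∧ IsOpen v ∧
      (∀ w ∈ combSet I a b, w ≠ z → w ∈ u ∨ w ∈ v) ∧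
      (∀ w ∈ combSet I a b, w ∈ u → w ∉ v) ∧
      ((x ∈ v ∧ y ∈ u) ∨ (x ∈ u ∧ y ∈ v)) := by
  have hex : ∃ k, x k ≠ y k := by
    by_contra h
    push_neg at h
    exact hxy (funext h)
  have hpre : ∀ k < Nat.find hex, x k = y k := fun k hk =>
    not_ne_iff.mp (Nat.find_min hex hk)
  rcases lt_or_gt_of_ne (Nat.find_spec hex) with h | h
  · obtain ⟨z, hz, hzx, hzy, u, v, hu, hv, hcov, hdisj, hxv, hyu⟩ :=
      separation_aux hI hx hy hpre h
    exact ⟨z, hz, hzx, hzy, u, v, hu, hv, hcov, hdisj, Or.inl ⟨hxv, hyu⟩⟩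
  · obtain ⟨z, hz, hzy, hzx, u, v, hu, hv, hcov, hdisj, hyv, hxu⟩ :=
      separation_aux hI hy hx (fun k hk => (hpre k hk).symm) h
    exact ⟨z, hz, hzx, hzy, u, v, hu, hv, hcov, hdisj, Or.inr ⟨hxu, hyv⟩⟩

end CombAux

section Sphere

open Complex

lemma sphere_preconnected : IsPreconnected (Metric.sphere (0:ℂ) 1) := by
  have : (1:Cardinal) < Module.rank ℝ ℂ := by
    rw [Complex.rank_real_complex]
    norm_num
  exact (isConnected_sphere this 0 zero_le_one).isPreconnected

lemma sphere_diff_singleton_preconnected {p : ℂ} (hp : p ∈ Metric.sphere (0:ℂ) 1) :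
    IsPreconnected (Metric.sphere (0:ℂ) 1 \ {p}) := by
  have hpabs : ‖p‖ = 1 := by
    simpa [Complex.dist_eq] using hp
  have hp0 : p ≠ 0 := by
    intro h
    rw [h] at hpabs
    simp at hpabs
  have himg : Metric.sphere (0:ℂ) 1 \ {p} =
      (fun t : ℝ => p * Complex.exp (t * Complex.I)) '' Set.Ioo 0 (2 * Real.pi) := by
    ext q
    constructor
    · rintro ⟨hq, hqp⟩
      have hqabs : ‖q‖ = 1 := by simpa [Complex.dist_eq] using hq
      have hq0 : q ≠ 0 := by intro h; rw [h] at hqabs; simp at hqabs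
      set r := q / p with hr
      have hrabs : ‖r‖ = 1 := by
        rw [hr, norm_div, hqabs, hpabs]; norm_num
      have hr1 : r ≠ 1 := by
        rw [hr]
        intro h
        exact hqp (by simpa using (div_eq_one_iff_eq hp0).mp h)
      have hexp : Complex.exp ((arg r : ℂ) * Complex.I) = r := by
        have := Complex.norm_mul_exp_arg_mul_I r
        rwa [hrabs, Complex.ofReal_one, one_mul] at this
      have harg0 : arg r ≠ 0 := by
        intro h
        rw [h] at hexp
        simp at hexp
        exact hr1 hexp.symm
      have hargle : arg r ≤ Real.pi := Complex.arg_le_pi r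
      have harggt : -Real.pi < arg r := Complex.neg_pi_lt_arg r
      have hπ : (0:ℝ) < Real.pi := Real.pi_pos
      have hprq : p * r = q := by
        rw [hr]; field_simp
      rcases lt_or_gt_of_ne harg0 with hneg | hpos
      · refine ⟨arg r + 2 * Real.pi, ⟨by linarith, by linarith⟩, ?_⟩
        have hkey : Complex.exp ((↑(arg r + 2 * Real.pi) : ℂ) * Complex.I) = r := by
          push_cast
          rw [add_mul, Complex.exp_add, Complex.exp_two_pi_mul_I, mul_one, hexp]
        show p * Complex.exp ((↑(arg r + 2 * Real.pi) : ℂ) * Complex.I) = q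
        rw [hkey, hprq]
      · refine ⟨arg r, ⟨hpos, by linarith⟩, ?_⟩
        show p * Complex.exp ((arg r : ℂ) * Complex.I) = q
        rw [hexp, hprq]
    · rintro ⟨t, ht, rfl⟩
      have hπ : (0:ℝ) < Real.pi := Real.pi_pos
      constructor
      · simp only [Metric.mem_sphere, Complex.dist_eq, sub_zero, norm_mul, hpabs,
          Complex.norm_exp_ofReal_mul_I, one_mul]
      · simp only [Set.mem_singleton_iff]
        intro h
        have hexp1 : Complex.exp ((t:ℂ) * Complex.I) = 1 := by
          have := mul_left_cancel₀ hp0 (h.trans (mul_one p).symm)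
          exact this
        obtain ⟨k, hk⟩ := Complex.exp_eq_one_iff.mp hexp1
        have h2 : (t:ℂ) * Complex.I = ((((k:ℝ) * (2*Real.pi)) : ℝ) : ℂ) * Complex.I := by
          push_cast
          rw [hk]; ring
        have h3 := mul_right_cancel₀ Complex.I_ne_zero h2
        have ht2 : t = (k:ℝ) * (2*Real.pi) := by exact_mod_cast h3
        obtain ⟨ht1, ht3⟩ := ht
        rw [ht2] at ht1 ht3
        have hc0 : (0:ℝ) < (k:ℝ) := by nlinarith
        have hc1 : (k:ℝ) < 1 := by nlinarith
        have hd0 : (0:ℤ) < k := by exact_mod_cast hc0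
        have hd1 : (k:ℤ) < 1 := by exact_mod_cast hc1
        omega
  rw [himg]
  exact isPreconnected_Ioo.image _ (by fun_prop)

end Sphere


/-- The comb inverse limit of a finite family `(a_i,b_i)_{i=1}^n` is a dendrite:
nonempty, compact, connected, locally connected, metrizable, and containing no
subspace homeomorphic to the circle. -/
theorem stmt9 (n : ℕ) (hn : 0 < n) (a b : ℕ → ℝ)
    (hab : ∀ i, 1 ≤ i → i ≤ n → 0 < a i ∧ a i < b i ∧ b i ≤ 1)
    (hdist : ∀ i j, 1 ≤ i → i ≤ n → 1 ≤ j → j ≤ n → i ≠ j → a i ≠ a j) :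
    Nonempty ↥(combSet {i | 1 ≤ i ∧ i ≤ n} a b) ∧
    CompactSpace ↥(combSet {i | 1 ≤ i ∧ i ≤ n} a b) ∧
    ConnectedSpace ↥(combSet {i | 1 ≤ i ∧ i ≤ n} a b) ∧
    LocallyConnectedSpace ↥(combSet {i | 1 ≤ i ∧ i ≤ n} a b) ∧
    TopologicalSpace.MetrizableSpace ↥(combSet {i | 1 ≤ i ∧ i ≤ n} a b) ∧
    ∀ s : Set ↥(combSet {i | 1 ≤ i ∧ i ≤ n} a b),
      ¬ Nonempty (↥s ≃ₜ ↥(Metric.sphere (0 : ℂ) 1)) := by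
  set I : Set ℕ := {i | 1 ≤ i ∧ i ≤ n} with hIdef
  have hIfin : I.Finite := by
    apply (Set.finite_Icc 1 n).subset
    intro i hi
    exact Set.mem_Icc.mpr ⟨hi.1, hi.2⟩
  have hdist' : ∀ i ∈ I, ∀ j ∈ I, a i = a j → i = j := by
    intro i hi j hj hij
    by_contra hne
    exact hdist i j hi.1 hi.2 hj.1 hj.2 hne hij
  have h0 : (fun _ : ℕ => (0:ℝ)) ∈ combSet I a b :=
    ⟨fun _ => ⟨le_rfl, zero_le_one⟩, fun _ => Or.inl rfl⟩
  refine ⟨⟨⟨_, h0⟩⟩, ?_, ?_, ?_, ?_, ?_⟩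
  · exact isCompact_iff_compactSpace.mp (CombAux.comb_compact hIfin)
  · exact Subtype.connectedSpace ⟨⟨_, h0⟩, CombAux.comb_preconnected⟩
  · exact CombAux.comb_locallyConnected hIfin hdist'
  · infer_instance
  · -- no circles
    intro s hne
    obtain ⟨e⟩ := hne
    set ψ : ↥(Metric.sphere (0:ℂ) 1) → (ℕ → ℝ) :=
      fun q => (((e.symm q : ↥s) : ↥(combSet I a b)) : ℕ → ℝ) with hψ
    have hψcont : Continuous ψ :=
      continuous_subtype_val.comp (continuous_subtype_val.comp e.symm.continuous)
    have hψinj : Function.Injective ψ :=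
      Subtype.val_injective.comp (Subtype.val_injective.comp e.symm.injective)
    have hψX : ∀ q, ψ q ∈ combSet I a b := fun q => ((e.symm q : ↥s) : ↥(combSet I a b)).2
    have hsphere_pre : PreconnectedSpace ↥(Metric.sphere (0:ℂ) 1) :=
      Subtype.preconnectedSpace sphere_preconnected
    have hrange_pre : IsPreconnected (Set.range ψ) := by
      rw [← Set.image_univ]
      exact isPreconnected_univ.image ψ hψcont.continuousOn
    have h1mem : (1:ℂ) ∈ Metric.sphere (0:ℂ) 1 := by simp
    have h2mem : (-1:ℂ) ∈ Metric.sphere (0:ℂ) 1 := by simp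
    set q1 : ↥(Metric.sphere (0:ℂ) 1) := ⟨1, h1mem⟩ with hq1
    set q2 : ↥(Metric.sphere (0:ℂ) 1) := ⟨-1, h2mem⟩ with hq2
    have hq12 : q1 ≠ q2 := by
      intro h
      have : (1:ℂ) = -1 := congrArg Subtype.val h
      norm_num at this
    have hxy : ψ q1 ≠ ψ q2 := fun h => hq12 (hψinj h)
    obtain ⟨z, hzX, hzx, hzy, u, v, huo, hvo, hcov, hdisj, hsides⟩ :=
      CombAux.separation hIfin (hψX q1) (hψX q2) hxy
    -- z must lie in the circle
    have hzr : z ∈ Set.range ψ := by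
      by_contra hzr
      have hsub : Set.range ψ ⊆ u ∪ v := by
        rintro _ ⟨q, rfl⟩
        exact hcov _ (hψX q) (fun h => hzr ⟨q, h⟩)
      have hu_ne : (Set.range ψ ∩ u).Nonempty := by
        rcases hsides with ⟨hxv, hyu⟩ | ⟨hxu, hyv⟩
        · exact ⟨ψ q2, ⟨q2, rfl⟩, hyu⟩
        · exact ⟨ψ q1, ⟨q1, rfl⟩, hxu⟩
      have hv_ne : (Set.range ψ ∩ v).Nonempty := by
        rcases hsides with ⟨hxv, hyu⟩ | ⟨hxu, hyv⟩
        · exact ⟨ψ q1, ⟨q1, rfl⟩, hxv⟩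
        · exact ⟨ψ q2, ⟨q2, rfl⟩, hyv⟩
      obtain ⟨w, ⟨q, rfl⟩, hwu, hwv⟩ := hrange_pre u v huo hvo hsub hu_ne hv_ne
      exact hdisj _ (hψX q) hwu hwv
    obtain ⟨qz, hqz⟩ := hzr
    -- the circle minus the point z is still preconnected
    have hcompl_pre : IsPreconnected ({qz}ᶜ : Set ↥(Metric.sphere (0:ℂ) 1)) := by
      rw [← Topology.IsInducing.subtypeVal.isPreconnected_image]
      have himg : (Subtype.val '' ({qz}ᶜ : Set ↥(Metric.sphere (0:ℂ) 1))) =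
          Metric.sphere (0:ℂ) 1 \ {(qz : ℂ)} := by
        ext w
        constructor
        · rintro ⟨q, hq, rfl⟩
          exact ⟨q.2, fun h => hq (Subtype.val_injective (by simpa using h))⟩
        · rintro ⟨hw, hwz⟩
          exact ⟨⟨w, hw⟩, fun h => hwz (by simpa using congrArg Subtype.val h), rfl⟩
      rw [himg]
      exact sphere_diff_singleton_preconnected qz.2
    have hTpre : IsPreconnected (ψ '' ({qz}ᶜ)) :=
      hcompl_pre.image ψ hψcont.continuousOn
    have hTsub : ψ '' ({qz}ᶜ) ⊆ u ∪ v := by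
      rintro _ ⟨q, hq, rfl⟩
      refine hcov _ (hψX q) ?_
      rw [← hqz]
      exact fun h => hq (hψinj h)
    have hq1z : q1 ∈ ({qz}ᶜ : Set _) := by
      intro h
      apply hzx
      rw [← hqz, Set.mem_singleton_iff.mp h]
    have hq2z : q2 ∈ ({qz}ᶜ : Set _) := by
      intro h
      apply hzy
      rw [← hqz, Set.mem_singleton_iff.mp h]
    have hu_ne : (ψ '' ({qz}ᶜ) ∩ u).Nonempty := by
      rcases hsides with ⟨hxv, hyu⟩ | ⟨hxu, hyv⟩
      · exact ⟨ψ q2, ⟨q2, hq2z, rfl⟩, hyu⟩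
      · exact ⟨ψ q1, ⟨q1, hq1z, rfl⟩, hxu⟩
    have hv_ne : (ψ '' ({qz}ᶜ) ∩ v).Nonempty := by
      rcases hsides with ⟨hxv, hyu⟩ | ⟨hxu, hyv⟩
      · exact ⟨ψ q1, ⟨q1, hq1z, rfl⟩, hxv⟩
      · exact ⟨ψ q2, ⟨q2, hq2z, rfl⟩, hyv⟩
    obtain ⟨w, ⟨q, hq, rfl⟩, hwu, hwv⟩ := hTpre u v huo hvo hTsub hu_ne hv_ne
    exact hdisj _ (hψX q) hwu hwv
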